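/- arXiv:1407.5843 — 9 statements merged into one kernel-verified Lean document; each statement's English description precedes it below -/
import Mathlib

section
/- Let r ≥ 2 and a be coprime positive integers, and let b be an inverse of a modulo r (i.e. ab ≡ 1 mod r). For any integer i, define δ_i = (1/r) · Σ_{ε ∈ μ_r, ε ≠ 1} (ε^{-i} − 1)/(1 − ε^a). Then δ_i = −(bi mod r)/r, where (bi mod r) denotes the smallest nonnegative residue of bi modulo r. -/
open Polynomial Finset

/-- A complex number with `ε ^ r = 1` has zpowers depending only on the exponent mod `r`. -/
lemma zpow_congr_mod {r : ℕ} {ε : ℂ} (hε : ε ≠ 0) (h1 : ε ^ r = 1) {m n : ℤ}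
    (h : m ≡ n [ZMOD (r : ℤ)]) : ε ^ m = ε ^ n := by
  obtain ⟨t, ht⟩ := Int.ModEq.dvd h
  have hm : m = n - (r : ℤ) * t := by linarith
  rw [hm, zpow_sub₀ hε, zpow_mul, zpow_natCast, h1, one_zpow, div_one]

/-- Sum of `j`-th powers over all `r`-th roots of unity. -/
lemma sum_nthRoots_pow {r : ℕ} (hr : 0 < r) (j : ℕ) :
    ∑ ε ∈ nthRootsFinset r (1 : ℂ), ε ^ j = if r ∣ j then (r : ℂ) else 0 := by
  classical
  have hζ : IsPrimitiveRoot (Complex.exp (2 * Real.pi * Complex.I / r)) r :=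
    Complex.isPrimitiveRoot_exp r hr.ne'
  set ζ := Complex.exp (2 * Real.pi * Complex.I / r) with hζdef
  have himg : nthRootsFinset r (1 : ℂ) = (Finset.range r).image (ζ ^ ·) := by
    rw [nthRootsFinset_def, hζ.nthRoots_eq (one_pow r)]
    ext x
    simp [Multiset.toFinset_map, Multiset.mem_map, Multiset.mem_range, Finset.mem_image]
  rw [himg, Finset.sum_image
    (fun x hx y hy h => hζ.injOn_pow (by simpa using hx) (by simpa using hy) h)]
  have hsimp : ∀ x, (ζ ^ x) ^ j = (ζ ^ j) ^ x := fun x => by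
    rw [← pow_mul, mul_comm, pow_mul]
  rw [Finset.sum_congr rfl fun x _ => hsimp x]
  by_cases hdvd : r ∣ j
  · rw [if_pos hdvd]
    have : ζ ^ j = 1 := (hζ.pow_eq_one_iff_dvd j).mpr hdvd
    simp [this]
  · rw [if_neg hdvd]
    have hne : ζ ^ j ≠ 1 := fun h => hdvd ((hζ.pow_eq_one_iff_dvd j).mp h)
    rw [geom_sum_eq hne]
    have : (ζ ^ j) ^ r = 1 := by rw [← pow_mul, mul_comm, pow_mul, hζ.pow_eq_one, one_pow]
    rw [this, sub_self, zero_div]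

/-- For coprime `r ≥ 2` and `a ≥ 1`, with `b` an inverse of `a` mod `r`, and any integer `i`,
`δ_i = (1/r) Σ_{ε ∈ μ_r, ε ≠ 1} (ε^{-i} - 1)/(1 - ε^a) = -(bi mod r)/r`. -/
theorem delta_formula (r a b : ℕ) (hr : 2 ≤ r) (ha : 0 < a) (hcop : Nat.Coprime a r)
    (hb : a * b ≡ 1 [MOD r]) (i : ℤ) :
    (1 / r : ℂ) * ∑ ε ∈ (nthRootsFinset r (1 : ℂ)).filter (fun ε => ε ≠ 1),
        (ε ^ (-i) - 1) / (1 - ε ^ a)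
      = -((((b : ℤ) * i) % (r : ℤ) : ℤ) : ℂ) / r := by
  classical
  have hr0 : 0 < r := by omega
  have hrZ : (r : ℤ) ≠ 0 := by exact_mod_cast hr0.ne'
  -- the inverse relation as an equation in ℕ
  have hb' : a * b % r = 1 := by
    have h1 : (1 : ℕ) % r = 1 := Nat.mod_eq_of_lt (by omega)
    have h2 := hb; unfold Nat.ModEq at h2; omega
  obtain ⟨t, hab⟩ : ∃ t, a * b = r * t + 1 :=
    ⟨a * b / r, by have := Nat.div_add_mod (a * b) r; omega⟩
  set m : ℤ := ((b : ℤ) * i) % r with hm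
  set k' : ℤ := (-((b : ℤ) * i)) % r with hk'
  have hk'0 : 0 ≤ k' := Int.emod_nonneg _ hrZ
  have hk'lt : k' < r := Int.emod_lt_of_pos _ (by exact_mod_cast hr0)
  have hm0 : 0 ≤ m := Int.emod_nonneg _ hrZ
  have hmlt : m < r := Int.emod_lt_of_pos _ (by exact_mod_cast hr0)
  set k : ℕ := k'.toNat with hkdef
  have hkk' : (k : ℤ) = k' := Int.toNat_of_nonneg hk'0
  have hkr : k < r := by omega
  -- divisibility fact
  have hdvdkm : (r : ℤ) ∣ k' + m := by
    have h0 : (k' + m) % r = 0 := by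
      rw [hk', hm, ← Int.add_emod]
      simp
    exact Int.dvd_of_emod_eq_zero h0
  -- the key integer identity
  have hint : k' - (if 0 < k' then (r : ℤ) else 0) = -m := by
    by_cases hpos : 0 < k'
    · rw [if_pos hpos]
      have hd : (r : ℤ) ∣ k' + m - r := (Int.dvd_sub hdvdkm (dvd_refl _))
      have := Int.eq_zero_of_abs_lt_dvd hd (by rw [abs_lt]; omega)
      omega
    · rw [if_neg hpos]
      have hk0 : k' = 0 := by omega
      have hd : (r : ℤ) ∣ m := by rw [hk0] at hdvdkm; simpa using hdvdkm
      have := Int.eq_zero_of_abs_lt_dvd hd (by rw [abs_lt]; omega)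
      omega
  -- per-term rewriting
  have hterm : ∀ ε ∈ (nthRootsFinset r (1 : ℂ)).filter (fun ε => ε ≠ 1),
      (ε ^ (-i) - 1) / (1 - ε ^ a) = -(∑ j ∈ Finset.range k, ε ^ (a * j)) := by
    intro ε hε
    rw [Finset.mem_filter] at hε
    obtain ⟨hεmem, hεne⟩ := hε
    have hεr : ε ^ r = 1 := (mem_nthRootsFinset hr0 (1 : ℂ)).mp hεmem
    have hε0 : ε ≠ 0 := ne_zero_of_mem_nthRootsFinset one_ne_zero hεmem
    -- ε ^ a ≠ 1
    have hεa : ε ^ a ≠ 1 := by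
      intro h
      apply hεne
      have : ε ^ (a * b) = 1 := by rw [pow_mul, h, one_pow]
      rw [hab, pow_succ, pow_mul, hεr, one_pow, one_mul] at this
      exact this
    have hεa' : (1 : ℂ) - ε ^ a ≠ 0 := fun h => hεa (by linear_combination -h)
    -- ε ^ (-i) = (ε ^ a) ^ k
    have hnum : ε ^ (-i) = (ε ^ a) ^ k := by
      have hmod : ((a * k : ℕ) : ℤ) ≡ -i [ZMOD (r : ℤ)] := by
        have h1 : (k : ℤ) ≡ -((b : ℤ) * i) [ZMOD (r : ℤ)] := by
          rw [hkk', hk']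
          exact Int.emod_emod_of_dvd _ dvd_rfl
        have h2 : ((a : ℤ)) * (k : ℤ) ≡ (a : ℤ) * (-((b : ℤ) * i)) [ZMOD (r : ℤ)] :=
          h1.mul_left _
        have habZ : (a : ℤ) * b = (r : ℤ) * t + 1 := by exact_mod_cast hab
        have h3 : ((a : ℤ) * b) ≡ 1 [ZMOD (r : ℤ)] :=
          Int.ModEq.symm (Int.modEq_iff_dvd.mpr ⟨t, by linarith⟩)
        calc ((a * k : ℕ) : ℤ) = (a : ℤ) * (k : ℤ) := by push_cast; ring
          _ ≡ (a : ℤ) * (-((b : ℤ) * i)) [ZMOD (r : ℤ)] := h2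
          _ = ((a : ℤ) * b) * (-i) := by ring
          _ ≡ 1 * (-i) [ZMOD (r : ℤ)] := h3.mul_right _
          _ = -i := by ring
      calc ε ^ (-i) = ε ^ ((a * k : ℕ) : ℤ) := (zpow_congr_mod hε0 hεr hmod).symm
        _ = ε ^ (a * k) := zpow_natCast ε (a * k)
        _ = (ε ^ a) ^ k := pow_mul ε a k
    rw [hnum]
    -- geometric sum
    have hgeom := geom_sum_mul (ε ^ a) k
    have : ∀ j ∈ Finset.range k, (ε ^ a) ^ j = ε ^ (a * j) := fun j _ => (pow_mul ε a j).symm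
    rw [← Finset.sum_congr rfl this]
    rw [div_eq_iff hεa']
    linear_combination -hgeom
  rw [Finset.sum_congr rfl hterm, Finset.sum_neg_distrib, Finset.sum_comm]
  -- inner sums
  have hinner : ∀ j ∈ Finset.range k,
      ∑ ε ∈ (nthRootsFinset r (1 : ℂ)).filter (fun ε => ε ≠ 1), ε ^ (a * j)
        = (if j = 0 then (r : ℂ) else 0) - 1 := by
    intro j hj
    rw [Finset.mem_range] at hj
    have h1mem : (1 : ℂ) ∈ nthRootsFinset r (1 : ℂ) := one_mem_nthRootsFinset hr0
    rw [Finset.filter_ne', Finset.sum_erase_eq_sub h1mem, one_pow,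
      sum_nthRoots_pow hr0 (a * j)]
    congr 1
    have : r ∣ a * j ↔ j = 0 := by
      constructor
      · intro h
        have hj' : r ∣ j := (Nat.Coprime.dvd_of_dvd_mul_left (hcop.symm)) h
        exact Nat.eq_zero_of_dvd_of_lt hj' (by omega)
      · rintro rfl; simp
    simp only [this]
  rw [Finset.sum_congr rfl hinner, Finset.sum_sub_distrib, Finset.sum_ite_eq' (Finset.range k) 0
    (fun _ => (r : ℂ))]
  simp only [Finset.mem_range, Finset.sum_const, Finset.card_range, nsmul_eq_mul, mul_one]
  -- final computation
  have hfinal : (if 0 < k then (r : ℂ) else 0) - (k : ℂ) = (m : ℂ) := by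
    by_cases hk0 : 0 < k
    · rw [if_pos hk0]
      have hZ : (r : ℤ) - (k : ℤ) = m := by
        rw [if_pos (show 0 < k' by omega)] at hint; omega
      exact_mod_cast hZ
    · rw [if_neg hk0]
      have hkz : k = 0 := by omega
      have hmz : m = 0 := by
        rw [if_neg (show ¬ 0 < k' by omega)] at hint; omega
      rw [hkz, hmz]; simp
  rw [show -((if 0 < k then (r : ℂ) else 0) - (k : ℂ)) = -(m : ℂ) by rw [hfinal]]
  ring
end

section
/- Let r ≥ 2 and let a_1,…,a_n be positive integers, none divisible by r, with gcd(a_j, r) = 1 for all j. Define σ_i = (1/r) · Σ_{ε ∈ μ_r, ε ≠ 1} ε^i / ∏_{j=1}^n (1 − ε^{-a_j}). Then the polynomial Σ_{i=0}^{r−1} σ_i t^i is an inverse of ∏_{j=1}^n (1 − t^{a_j}) modulo the cyclotomic-type polynomial (1 − t^r)/(1 − t); that is, (Σ_{i=0}^{r−1} σ_i t^i) · ∏_{j=1}^n (1 − t^{a_j}) ≡ 1 modulo (1 − t^r)/(1 − t) in ℂ[t]. -/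
open Polynomial Finset

lemma geom_sum_root_zero {r : ℕ} {ζ : ℂ} (h : ζ ^ r = 1) (h1 : ζ ≠ 1) :
    ∑ i ∈ Finset.range r, ζ ^ i = 0 := by
  rw [geom_sum_eq h1, h, sub_self, zero_div]

lemma pow_ne_one_of_coprime {r a : ℕ} (hr : 0 < r) {ε : ℂ}
    (hεr : ε ^ r = 1) (hε1 : ε ≠ 1) (hc : Nat.Coprime a r) : ε ^ a ≠ 1 := by
  intro h
  apply hε1
  have hord : orderOf ε ∣ Nat.gcd a r :=
    Nat.dvd_gcd (orderOf_dvd_of_pow_eq_one h) (orderOf_dvd_of_pow_eq_one hεr)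
  rw [hc] at hord
  have : orderOf ε = 1 := Nat.eq_one_of_dvd_one hord
  exact orderOf_eq_one_iff.mp this

/-- For `r ≥ 2` and positive `a_1, …, a_n` all coprime to `r`, the polynomial
`Σ_{i<r} σ_i t^i` is an inverse of `∏_j (1 - t^{a_j})` modulo `(1-t^r)/(1-t) = 1 + t + ⋯ + t^{r-1}`
in `ℂ[t]`, where `σ_i = (1/r) Σ_{ε ∈ μ_r, ε ≠ 1} ε^i / ∏_j (1 - ε^{-a_j})`. -/
theorem dedekind_inverse_mod (r n : ℕ) (hr : 2 ≤ r) (a : Fin n → ℕ)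
    (ha : ∀ j, 0 < a j) (hcop : ∀ j, Nat.Coprime (a j) r) :
    (∑ i ∈ Finset.range r, (X : ℂ[X]) ^ i) ∣
      ((∑ i ∈ Finset.range r,
          Polynomial.C ((1 / r : ℂ) *
            ∑ ε ∈ (nthRootsFinset r (1 : ℂ)).filter (fun ε => ε ≠ 1),
              ε ^ i / ∏ j, (1 - ε ^ (-(a j : ℤ)))) * X ^ i) *
        ∏ j, (1 - (X : ℂ[X]) ^ (a j)) - 1) := by
  have hr0 : 0 < r := by omega
  set S := (nthRootsFinset r (1 : ℂ)).filter (fun ε => ε ≠ 1) with hS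
  have h1mem : (1 : ℂ) ∈ nthRootsFinset r (1 : ℂ) := by
    rw [mem_nthRootsFinset hr0]; simp
  -- Step A: the geometric polynomial factors as a product of distinct linear factors
  have hprod : (∑ i ∈ Finset.range r, (X : ℂ[X]) ^ i) = ∏ ζ ∈ S, (X - C ζ) := by
    have hfac : ((X : ℂ[X]) - C 1) * ∑ i ∈ Finset.range r, (X : ℂ[X]) ^ i
        = (X - C 1) * ∏ ζ ∈ S, (X - C ζ) := by
      rw [hS, Finset.filter_ne',
        Finset.mul_prod_erase (nthRootsFinset r (1 : ℂ)) (fun ζ => X - C ζ) h1mem,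
        ← X_pow_sub_one_eq_prod hr0 (Complex.isPrimitiveRoot_exp r hr0.ne'), map_one,
        mul_geom_sum]
    exact mul_left_cancel₀ (X_sub_C_ne_zero 1) hfac
  rw [hprod]
  -- Step B: reduce to showing each ε ∈ S is a root
  apply Finset.prod_dvd_of_coprime
  · intro x hx y hy hxy
    exact (Polynomial.pairwise_coprime_X_sub_C Function.injective_id) hxy
  · intro ε hεS
    rw [dvd_iff_isRoot]
    -- facts about ε
    rw [hS, Finset.mem_filter, mem_nthRootsFinset hr0] at hεS
    obtain ⟨hεr, hε1⟩ := hεS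
    have hε0 : ε ≠ 0 := by
      intro h; rw [h, zero_pow hr0.ne'] at hεr; exact zero_ne_one hεr
    have hinvr : (ε⁻¹) ^ r = 1 := by
      rw [inv_pow, hεr, inv_one]
    have hinv1 : ε⁻¹ ≠ 1 := by
      intro h
      apply hε1
      rw [← inv_inv ε, h, inv_one]
    have hinvS : ε⁻¹ ∈ S := by
      rw [hS, Finset.mem_filter, mem_nthRootsFinset hr0]
      exact ⟨hinvr, hinv1⟩
    -- abbreviation for denominators
    set D : ℂ → ℂ := fun η => ∏ j, (1 - η ^ (-(a j : ℤ))) with hD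
    -- D ε⁻¹ equals the evaluated product
    have hDinv : D ε⁻¹ = ∏ j, (1 - ε ^ (a j)) := by
      rw [hD]
      refine Finset.prod_congr rfl fun j _ => ?_
      congr 1
      rw [zpow_neg, inv_zpow, inv_inv, zpow_natCast]
    have hDne : D ε⁻¹ ≠ 0 := by
      rw [hDinv]
      refine Finset.prod_ne_zero_iff.mpr fun j _ => ?_
      rw [sub_ne_zero]
      exact fun h => pow_ne_one_of_coprime hr0 hεr hε1 (hcop j) h.symm
    -- key evaluation
    have key : (∑ i ∈ Finset.range r, (1 / (r : ℂ)) * (∑ η ∈ S, η ^ i / D η) * ε ^ i)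
        = 1 / D ε⁻¹ := by
      have step1 : ∀ i, (1 / (r : ℂ)) * (∑ η ∈ S, η ^ i / D η) * ε ^ i
          = (1 / (r : ℂ)) * ∑ η ∈ S, (η * ε) ^ i / D η := by
        intro i
        rw [mul_assoc, Finset.sum_mul]
        congr 1
        refine Finset.sum_congr rfl fun η _ => ?_
        rw [div_mul_eq_mul_div, mul_pow]
      simp_rw [step1]
      rw [← Finset.mul_sum, Finset.sum_comm]
      have step2 : ∀ η ∈ S, (∑ i ∈ Finset.range r, (η * ε) ^ i / D η)
          = (∑ i ∈ Finset.range r, (η * ε) ^ i) / D η := by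
        intro η _
        rw [Finset.sum_div]
      rw [Finset.sum_congr rfl step2]
      rw [Finset.sum_eq_single ε⁻¹]
      · rw [inv_mul_cancel₀ hε0]
        simp only [one_pow, Finset.sum_const, Finset.card_range, nsmul_eq_mul, mul_one]
        have hrne : (r : ℂ) ≠ 0 := Nat.cast_ne_zero.mpr hr0.ne'
        field_simp
      · intro η hη hne
        rw [hS, Finset.mem_filter, mem_nthRootsFinset hr0] at hη
        have hne1 : η * ε ≠ 1 := fun h => hne (eq_inv_of_mul_eq_one_left h)
        have hpow : (η * ε) ^ r = 1 := by rw [mul_pow, hη.1, hεr, one_mul]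
        rw [geom_sum_root_zero hpow hne1, zero_div]
      · intro h; exact absurd hinvS h
    -- finish: evaluate everything at ε
    have heval : Polynomial.eval ε ((∑ i ∈ Finset.range r,
          Polynomial.C ((1 / r : ℂ) *
            ∑ η ∈ S, η ^ i / D η) * X ^ i) *
        ∏ j, (1 - (X : ℂ[X]) ^ (a j)) - 1)
        = (∑ i ∈ Finset.range r, (1 / (r : ℂ)) * (∑ η ∈ S, η ^ i / D η) * ε ^ i)
            * (∏ j, (1 - ε ^ (a j))) - 1 := by
      simp [eval_finset_sum, eval_prod]
    rw [IsRoot.def, heval, key, ← hDinv, one_div, inv_mul_cancel₀ hDne, sub_self]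
end

section
/- Let r ≥ 2 and let a_1,…,a_n be positive integers none divisible by r. Let h = gcd(∏_{j=1}^n (1 − t^{a_j}), (1−t^r)/(1−t)) in ℚ[t]. Define σ_i = (1/r) · Σ_{ε ∈ μ_r, ε^{a_j} ≠ 1 for all j} ε^i / ∏_{j=1}^n (1 − ε^{-a_j}). Then (Σ_{i=0}^{r−1} σ_i t^i) · ∏_{j=1}^n (1 − t^{a_j}) ≡ 1 modulo (1 − t^r)/(h·(1−t)) in ℂ[t]. -/
open Polynomial Finset

open Classical in
/-- For `r ≥ 2` and positive `a_1, …, a_n` none divisible by `r`, with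
`h = gcd(∏_j (1 - t^{a_j}), (1-t^r)/(1-t))`, the polynomial `Σ_{i<r} σ_i t^i` is an inverse
of `∏_j (1 - t^{a_j})` modulo `(1-t^r)/(h(1-t))` in `ℂ[t]`, where
`σ_i = (1/r) Σ_{ε ∈ μ_r, ε^{a_j} ≠ 1 ∀ j} ε^i / ∏_j (1 - ε^{-a_j})`. -/
theorem dedekind_inverse_mod_general (r n : ℕ) (hr : 2 ≤ r) (a : Fin n → ℕ)
    (ha : ∀ j, 0 < a j) (hra : ∀ j, ¬ r ∣ a j) :
    ((∑ i ∈ Finset.range r, (X : ℂ[X]) ^ i) /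
        EuclideanDomain.gcd (∏ j, (1 - (X : ℂ[X]) ^ (a j)))
          (∑ i ∈ Finset.range r, (X : ℂ[X]) ^ i)) ∣
      ((∑ i ∈ Finset.range r,
          Polynomial.C ((1 / r : ℂ) *
            ∑ ε ∈ (nthRootsFinset r (1 : ℂ)).filter (fun ε => ∀ j, ε ^ (a j) ≠ 1),
              ε ^ i / ∏ j, (1 - ε ^ (-(a j : ℤ)))) * X ^ i) *
        ∏ j, (1 - (X : ℂ[X]) ^ (a j)) - 1) := by
  have hrpos : 0 < r := by omega
  have hr0 : (r : ℂ) ≠ 0 := Nat.cast_ne_zero.mpr (by omega)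
  set T := (nthRootsFinset r (1 : ℂ)).filter (fun ε => ∀ j, ε ^ (a j) ≠ 1) with hT
  set W : ℂ → ℂ := fun ε => ∏ j, (1 - ε ^ (-(a j : ℤ))) with hW
  set Φ : ℂ[X] := ∑ i ∈ Finset.range r, (X : ℂ[X]) ^ i with hΦ
  set P : ℂ[X] := ∏ j, (1 - (X : ℂ[X]) ^ (a j)) with hP
  set S : ℂ[X] := ∑ i ∈ Finset.range r,
      Polynomial.C ((1 / r : ℂ) * ∑ ε ∈ T, ε ^ i / W ε) * X ^ i with hS
  set g := EuclideanDomain.gcd P Φ with hg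
  set D := Φ / g with hD
  -- basic facts
  have hΦ1 : Φ.eval 1 = (r : ℂ) := by simp [hΦ]
  have hΦne : Φ ≠ 0 := by
    intro h
    rw [h] at hΦ1
    simp at hΦ1
    exact hr0 hΦ1.symm
  have hΦdvd : Φ ∣ (X : ℂ[X]) ^ r - 1 := ⟨X - 1, (geom_sum_mul _ _).symm⟩
  have hsep : ((X : ℂ[X]) ^ r - 1).Separable := X_pow_sub_one_separable_iff.2 hr0
  have hgdvd : g ∣ Φ := EuclideanDomain.gcd_dvd_right _ _
  have hgne : g ≠ 0 := by
    intro h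
    exact hΦne (EuclideanDomain.gcd_eq_zero_iff.mp h).2
  have hDg : g * D = Φ := EuclideanDomain.mul_div_cancel' hgne hgdvd
  have hDdvdΦ : D ∣ Φ := ⟨g, by rw [← hDg]; ring⟩
  have hDdvd : D ∣ (X : ℂ[X]) ^ r - 1 := hDdvdΦ.trans hΦdvd
  have hDsep : D.Separable := hsep.of_dvd hDdvd
  have hDne : D ≠ 0 := by
    intro h
    exact hΦne (by rw [← hDg, h, mul_zero])
  by_cases hQ : S * P - 1 = 0
  · rw [hQ]; exact dvd_zero _
  refine (IsAlgClosed.splits D).dvd_of_roots_le_roots hDne ?_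
  rw [Multiset.le_iff_subset (Polynomial.nodup_roots hDsep)]
  intro ζ hζ
  have hζroot : D.IsRoot ζ := (Polynomial.mem_roots hDne).mp hζ
  rw [Polynomial.mem_roots hQ]
  -- ζ is an r-th root of unity
  have hζr : ζ ^ r = 1 := by
    have := hζroot.dvd hDdvd
    simpa [Polynomial.IsRoot, sub_eq_zero] using this
  have hζ0 : ζ ≠ 0 := by
    intro h
    rw [h, zero_pow hrpos.ne'] at hζr
    exact zero_ne_one hζr
  have hζΦ : Φ.eval ζ = 0 := hζroot.dvd hDdvdΦ
  have hζ1 : ζ ≠ 1 := by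
    intro h
    rw [h, hΦ1] at hζΦ
    exact hr0 hζΦ
  -- ζ^{a_j} ≠ 1 for all j
  have hPζ : ∀ j, ζ ^ a j ≠ 1 := by
    by_contra hcon
    push_neg at hcon
    obtain ⟨j, hj⟩ := hcon
    have hPz : P.eval ζ = 0 := by
      rw [hP, Polynomial.eval_prod]
      refine Finset.prod_eq_zero (Finset.mem_univ j) ?_
      simp [hj]
    have h1 : (X - C ζ) ∣ P := Polynomial.dvd_iff_isRoot.mpr hPz
    have h2 : (X - C ζ) ∣ Φ := Polynomial.dvd_iff_isRoot.mpr hζΦ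
    have h3 : (X - C ζ) ∣ g := EuclideanDomain.dvd_gcd h1 h2
    have h4 : (X - C ζ) ∣ D := Polynomial.dvd_iff_isRoot.mpr hζroot
    have h5 : (X - C ζ) * (X - C ζ) ∣ (X : ℂ[X]) ^ r - 1 :=
      (mul_dvd_mul h3 h4).trans (hDg ▸ hΦdvd)
    exact Polynomial.not_isUnit_X_sub_C ζ (hsep.squarefree _ h5)
  have hPev : P.eval ζ = ∏ j, (1 - ζ ^ a j) := by
    simp [hP, Polynomial.eval_prod]
  have hPevne : P.eval ζ ≠ 0 := by
    rw [hPev]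
    exact Finset.prod_ne_zero_iff.mpr fun j _ => sub_ne_zero.mpr fun h => hPζ j h.symm
  -- ζ⁻¹ belongs to T
  have hζinvT : ζ⁻¹ ∈ T := by
    rw [hT, Finset.mem_filter, Polynomial.mem_nthRootsFinset hrpos]
    constructor
    · rw [inv_pow, hζr, inv_one]
    · intro j h
      apply hPζ j
      rw [inv_pow] at h
      rw [← inv_inv (ζ ^ a j), h, inv_one]
  -- evaluate S at ζ
  have hSev : S.eval ζ = 1 / P.eval ζ := by
    have e1 : S.eval ζ = ∑ i ∈ Finset.range r,
        ((1 / r : ℂ) * ∑ ε ∈ T, ε ^ i / W ε) * ζ ^ i := by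
      simp [hS, Polynomial.eval_finset_sum]
    rw [e1]
    have e2 : ∀ i ∈ Finset.range r,
        ((1 / r : ℂ) * ∑ ε ∈ T, ε ^ i / W ε) * ζ ^ i
          = ∑ ε ∈ T, (1 / r : ℂ) * ((ε * ζ) ^ i / W ε) := by
      intro i _
      rw [Finset.mul_sum, Finset.sum_mul]
      refine Finset.sum_congr rfl fun ε _ => ?_
      rw [mul_pow]
      ring
    rw [Finset.sum_congr rfl e2, Finset.sum_comm]
    have e3 : ∀ ε ∈ T,
        (∑ i ∈ Finset.range r, (1 / r : ℂ) * ((ε * ζ) ^ i / W ε))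
          = if ε = ζ⁻¹ then 1 / W ε else 0 := by
      intro ε hε
      have hεr : ε ^ r = 1 := by
        rw [hT, Finset.mem_filter] at hε
        exact (Polynomial.mem_nthRootsFinset hrpos (1 : ℂ)).mp hε.1
      have hsum : ∑ i ∈ Finset.range r, (ε * ζ) ^ i
          = if ε = ζ⁻¹ then (r : ℂ) else 0 := by
        by_cases hεζ : ε = ζ⁻¹
        · subst hεζ
          simp [inv_mul_cancel₀ hζ0]
        · rw [if_neg hεζ]
          have hne1 : ε * ζ ≠ 1 := by
            intro h
            exact hεζ (eq_inv_of_mul_eq_one_left h)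
          have := geom_sum_mul (ε * ζ) r
          rw [mul_pow, hεr, hζr, mul_one, sub_self] at this
          exact (mul_eq_zero.mp this).resolve_right
            (sub_ne_zero.mpr hne1)
      calc ∑ i ∈ Finset.range r, (1 / r : ℂ) * ((ε * ζ) ^ i / W ε)
          = (1 / r : ℂ) * ((∑ i ∈ Finset.range r, (ε * ζ) ^ i) / W ε) := by
            rw [← Finset.mul_sum, Finset.sum_div]
        _ = if ε = ζ⁻¹ then 1 / W ε else 0 := by
            rw [hsum]
            by_cases hεζ : ε = ζ⁻¹ <;> simp [hεζ, hr0]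
            field_simp
    rw [Finset.sum_congr rfl e3, Finset.sum_ite_eq' T ζ⁻¹ (fun ε => 1 / W ε),
      if_pos hζinvT]
    congr 1
    rw [hW, hPev]
    refine Finset.prod_congr rfl fun j _ => ?_
    congr 1
    rw [zpow_neg, inv_zpow, zpow_natCast, inv_inv]
  rw [Polynomial.IsRoot, Polynomial.eval_sub, Polynomial.eval_mul, hSev,
    Polynomial.eval_one, one_div, inv_mul_cancel₀ hPevne, sub_self]
end

section
/- Let r ≥ 2, w a positive divisor of r with w ≥ 2, and let a_1,…,a_n be positive integers none divisible by r such that gcd(a_1, r) = w divides a_1. For every ε ∈ μ_r one has 1 + ε^w + ε^{2w} + ⋯ + ε^{w(r/w − 1)} = r/w if ε^w = 1, and = 0 otherwise. Consequently, for σ_i = (1/r)·Σ_{ε ∈ μ_r, ε^{a_j}≠1 ∀j} ε^i/∏_j(1−ε^{-a_j}) and any 0 ≤ k ≤ w−1, one has Σ_{l=0}^{r/w − 1} σ_{wl+k} = 0. -/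
open Polynomial Finset

open Classical in
/-- For `r ≥ 2`, `w ≥ 2` a divisor of `r`, and positive integers `a_0, …, a_n` none divisible
by `r` with `gcd(a_0, r) = w`: for every `ε ∈ μ_r` the geometric sum
`1 + ε^w + ⋯ + ε^{w(r/w - 1)}` is `r/w` if `ε^w = 1` and `0` otherwise; consequently the
Dedekind sums satisfy `Σ_{l=0}^{r/w-1} σ_{wl+k} = 0` for every `0 ≤ k ≤ w-1`. -/
theorem dedekind_partial_sums_vanish (r w n : ℕ) (hr : 2 ≤ r) (hw : 2 ≤ w) (hwr : w ∣ r)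
    (a : Fin (n + 1) → ℕ) (ha : ∀ j, 0 < a j) (hra : ∀ j, ¬ r ∣ a j)
    (hgcd : Nat.gcd (a 0) r = w)
    (σ : ℕ → ℂ)
    (hσ : ∀ i, σ i = (1 / r : ℂ) *
      ∑ ε ∈ (nthRootsFinset r (1 : ℂ)).filter (fun ε => ∀ j, ε ^ (a j) ≠ 1),
        ε ^ i / ∏ j, (1 - ε ^ (-(a j : ℤ))))
    (k : ℕ) (hk : k ≤ w - 1) :
    (∀ ε ∈ nthRootsFinset r (1 : ℂ),
        ∑ l ∈ Finset.range (r / w), ε ^ (w * l) =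
          if ε ^ w = 1 then ((r / w : ℕ) : ℂ) else 0) ∧
    ∑ l ∈ Finset.range (r / w), σ (w * l + k) = 0 := by
  have hgeom : ∀ ε ∈ nthRootsFinset r (1 : ℂ),
      ∑ l ∈ Finset.range (r / w), ε ^ (w * l) =
        if ε ^ w = 1 then ((r / w : ℕ) : ℂ) else 0 := by
    intro ε hε
    have hεr : ε ^ r = 1 := (mem_nthRootsFinset (by omega) (1 : ℂ)).mp hε
    by_cases h : ε ^ w = 1
    · simp [pow_mul, h]
    · rw [if_neg h]
      have : ∑ l ∈ Finset.range (r / w), ε ^ (w * l) =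
          ((ε ^ w) ^ (r / w) - 1) / (ε ^ w - 1) := by
        simp_rw [pow_mul]
        exact geom_sum_eq h _
      rw [this, ← pow_mul, Nat.mul_div_cancel' hwr, hεr]
      simp
  refine ⟨hgeom, ?_⟩
  have hwa : w ∣ a 0 := hgcd ▸ Nat.gcd_dvd_left _ _
  calc ∑ l ∈ Finset.range (r / w), σ (w * l + k)
      = (1 / r : ℂ) * ∑ ε ∈ (nthRootsFinset r (1 : ℂ)).filter (fun ε => ∀ j, ε ^ (a j) ≠ 1),
          (ε ^ k / ∏ j, (1 - ε ^ (-(a j : ℤ)))) * ∑ l ∈ Finset.range (r / w), ε ^ (w * l) := by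
        simp_rw [hσ, ← Finset.mul_sum]
        congr 1
        rw [Finset.sum_comm]
        refine Finset.sum_congr rfl fun ε _ => ?_
        rw [Finset.mul_sum]
        refine Finset.sum_congr rfl fun l _ => ?_
        rw [pow_add]
        ring
    _ = 0 := by
        rw [Finset.sum_eq_zero, mul_zero]
        intro ε hε
        rw [Finset.mem_filter] at hε
        have hεw : ε ^ w ≠ 1 := by
          intro hw1
          exact hε.2 0 (by
            obtain ⟨c, hc⟩ := hwa
            rw [hc, pow_mul, hw1, one_pow])
        rw [hgeom ε hε.1, if_neg hεw, mul_zero]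
end

section
/- Let r ≥ 2 and let a_1,…,a_n be positive integers none divisible by r. Then all the Dedekind sums σ_i = (1/r)·Σ_{ε ∈ μ_r, ε^{a_j}≠1 ∀j} ε^i/∏_{j=1}^n(1−ε^{-a_j}) are rational numbers. -/
open Polynomial Finset

open Classical in
/-- For `r ≥ 2` and positive integers `a_1, …, a_n` none divisible by `r`, every Dedekind sum
`σ_i = (1/r) Σ_{ε ∈ μ_r, ε^{a_j} ≠ 1 ∀ j} ε^i / ∏_j (1 - ε^{-a_j})` is a rational number. -/
theorem dedekind_sums_rational (r n : ℕ) (hr : 2 ≤ r) (a : Fin n → ℕ)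
    (ha : ∀ j, 0 < a j) (hra : ∀ j, ¬ r ∣ a j) (i : ℕ) :
    ∃ q : ℚ,
      (1 / r : ℂ) * ∑ ε ∈ (nthRootsFinset r (1 : ℂ)).filter (fun ε => ∀ j, ε ^ (a j) ≠ 1),
        ε ^ i / ∏ j, (1 - ε ^ (-(a j : ℤ))) = (q : ℂ) := by
  classical
  have hr0 : 0 < r := by omega
  set r' : ℕ+ := ⟨r, hr0⟩ with hr'def
  set K := CyclotomicField r' ℚ with hK
  haveI : IsCyclotomicExtension {(r' : ℕ)} ℚ K := CyclotomicField.isCyclotomicExtension (r' : ℕ) ℚ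
  haveI : FiniteDimensional ℚ K := IsCyclotomicExtension.finiteDimensional {(r' : ℕ)} ℚ K
  haveI hgal : IsGalois ℚ K := IsCyclotomicExtension.isGalois (S := {(r' : ℕ)}) (K := ℚ) (L := K)
  obtain ⟨ζ, hζ⟩ := IsCyclotomicExtension.exists_isPrimitiveRoot ℚ K (Set.mem_singleton (r' : ℕ)) r'.ne_zero
  have hcard : (nthRootsFinset r (1 : K)).card = r := hζ.card_nthRootsFinset
  let φ : K →ₐ[ℚ] ℂ := IsAlgClosed.lift
  have hφinj : Function.Injective φ := φ.injective
  -- the sum inside K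
  set S : K := ∑ ε ∈ (nthRootsFinset r (1 : K)).filter (fun ε => ∀ j, ε ^ (a j) ≠ 1),
      ε ^ i / ∏ j, (1 - ε ^ (-(a j : ℤ))) with hS
  set x : K := (1 / (r : K)) * S with hx
  -- the image of the roots of unity in K is the roots of unity in ℂ
  have himg : (nthRootsFinset r (1 : K)).image φ = nthRootsFinset r (1 : ℂ) := by
    apply Finset.eq_of_subset_of_card_le
    · intro y hy
      obtain ⟨z, hz, rfl⟩ := Finset.mem_image.mp hy
      simpa using map_mem_nthRootsFinset hz φ
    · rw [Finset.card_image_of_injective _ hφinj, hcard,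
        (Complex.isPrimitiveRoot_exp r (by omega)).card_nthRootsFinset]
  -- transfer the sum from ℂ to K via φ
  have key : (1 / r : ℂ) * ∑ ε ∈ (nthRootsFinset r (1 : ℂ)).filter (fun ε => ∀ j, ε ^ (a j) ≠ 1),
      ε ^ i / ∏ j, (1 - ε ^ (-(a j : ℤ))) = φ x := by
    have hfilter : (nthRootsFinset r (1 : ℂ)).filter (fun ε => ∀ j, ε ^ (a j) ≠ 1)
        = ((nthRootsFinset r (1 : K)).filter (fun ε => ∀ j, ε ^ (a j) ≠ 1)).image φ := by
      rw [← himg, Finset.filter_image]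
      congr 1
      apply Finset.filter_congr
      intro ε _
      constructor
      · intro h j hj
        exact h j (by rw [← map_pow, hj, map_one])
      · intro h j hj
        apply h j
        apply hφinj
        rw [map_pow, hj, map_one]
    rw [hfilter, Finset.sum_image (fun y _ z _ h => hφinj h)]
    rw [hx, map_mul, hS, map_sum]
    congr 1
    · rw [map_div₀, map_one, map_natCast]
    · apply Finset.sum_congr rfl
      intro ε _
      rw [map_div₀, map_pow, map_prod]
      congr 1
      apply Finset.prod_congr rfl
      intro j _
      rw [map_sub, map_one, map_zpow₀]
  -- x is fixed by the Galois group
  have hfix : ∀ g : K ≃ₐ[ℚ] K, g x = x := by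
    intro g
    have hginj : Function.Injective g := g.injective
    have hgimg : (nthRootsFinset r (1 : K)).image g = nthRootsFinset r (1 : K) := by
      apply Finset.eq_of_subset_of_card_le
      · intro y hy
        obtain ⟨z, hz, rfl⟩ := Finset.mem_image.mp hy
        simpa using map_mem_nthRootsFinset hz g
      · rw [Finset.card_image_of_injective _ hginj]
    have hfilter : (nthRootsFinset r (1 : K)).filter (fun ε => ∀ j, ε ^ (a j) ≠ 1)
        = ((nthRootsFinset r (1 : K)).filter (fun ε => ∀ j, ε ^ (a j) ≠ 1)).image g := by
      conv_lhs => rw [← hgimg]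
      rw [Finset.filter_image]
      congr 1
      apply Finset.filter_congr
      intro ε _
      constructor
      · intro h j hj
        exact h j (by rw [← map_pow, hj, map_one])
      · intro h j hj
        apply h j
        apply hginj
        rw [map_pow, hj, map_one]
    rw [hx, map_mul, hS, map_sum]
    congr 1
    · rw [map_div₀, map_one, map_natCast]
    · conv_rhs => rw [hfilter]
      rw [Finset.sum_image (fun y _ z _ h => hginj h)]
      apply Finset.sum_congr rfl
      intro ε _
      rw [map_div₀, map_pow, map_prod]
      congr 1
      apply Finset.prod_congr rfl
      intro j _
      rw [map_sub, map_one, map_zpow₀]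
  -- hence x is rational
  have hxbot : x ∈ (⊥ : IntermediateField ℚ K) := by
    rw [← IsGalois.fixedField_fixingSubgroup (⊥ : IntermediateField ℚ K)]
    intro g
    exact hfix g
  obtain ⟨q, hq⟩ := IntermediateField.mem_bot.mp hxbot
  refine ⟨q, ?_⟩
  rw [key, ← hq]
  have := φ.commutes q
  simp only [this]
  simp
end

section
/- Let s ≥ 2 and b_1,…,b_n be positive integers, none divisible by s, such that gcd(s, b_i, b_j) = 1 for all i ≠ j. Set w_i = gcd(s, b_i) and h = ∏_{i=1}^n (1 − t^{w_i})/(1 − t) in ℚ[t]. Then h = gcd(∏_{i=1}^n (1 − t^{b_i}), (1 − t^s)/(1 − t)) in ℚ[t] (up to a unit). -/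
open Polynomial

/-- Let `s ≥ 2` and `b_1, …, b_n` be positive integers none divisible by `s` with
`gcd(s, b_i, b_j) = 1` for `i ≠ j`. Setting `w_i = gcd(s, b_i)`, the polynomial
`h = ∏_i (1 - t^{w_i})/(1 - t) = ∏_i (1 + t + ⋯ + t^{w_i - 1})` is, up to a unit, the gcd of
`∏_i (1 - t^{b_i})` and `(1 - t^s)/(1 - t)` in `ℚ[t]`. -/
theorem h_eq_gcd (s n : ℕ) (hs : 2 ≤ s) (b : Fin n → ℕ)
    (hb : ∀ i, 0 < b i) (hsb : ∀ i, ¬ s ∣ b i)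
    (hpair : ∀ i j, i ≠ j → Nat.gcd s (Nat.gcd (b i) (b j)) = 1) :
    Associated
      (∏ i, ∑ j ∈ Finset.range (Nat.gcd s (b i)), (X : ℚ[X]) ^ j)
      (EuclideanDomain.gcd (∏ i, (1 - (X : ℚ[X]) ^ (b i)))
        (∑ j ∈ Finset.range s, (X : ℚ[X]) ^ j)) := by
  have hs0 : 0 < s := by omega
  set w : Fin n → ℕ := fun i => Nat.gcd s (b i) with hw
  have hw0 : ∀ i, 0 < w i := fun i => Nat.gcd_pos_of_pos_left _ hs0
  set A : ℚ[X] := ∏ i, (1 - (X : ℚ[X]) ^ (b i)) with hA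
  set B : ℚ[X] := ∑ j ∈ Finset.range s, (X : ℚ[X]) ^ j with hB
  set H : ℚ[X] := ∏ i, ∑ j ∈ Finset.range (w i), (X : ℚ[X]) ^ j with hH
  set D : Finset ℕ := s.divisors.erase 1 with hD
  set S : Finset ℕ := Finset.univ.biUnion (fun i : Fin n => (w i).divisors.erase 1) with hSdef
  -- H as a product of cyclotomics over S
  have hdisj : ∀ i ∈ (Finset.univ : Finset (Fin n)), ∀ j ∈ (Finset.univ : Finset (Fin n)),
      i ≠ j → Disjoint ((w i).divisors.erase 1) ((w j).divisors.erase 1) := by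
    intro i _ j _ hij
    rw [Finset.disjoint_left]
    intro d hdi hdj
    have h1 : d ≠ 1 := Finset.ne_of_mem_erase hdi
    have hdwi : d ∣ w i := Nat.dvd_of_mem_divisors (Finset.mem_of_mem_erase hdi)
    have hdwj : d ∣ w j := Nat.dvd_of_mem_divisors (Finset.mem_of_mem_erase hdj)
    have : d ∣ Nat.gcd s (Nat.gcd (b i) (b j)) :=
      Nat.dvd_gcd (hdwi.trans (Nat.gcd_dvd_left _ _))
        (Nat.dvd_gcd (hdwi.trans (Nat.gcd_dvd_right _ _)) (hdwj.trans (Nat.gcd_dvd_right _ _)))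
    rw [hpair i j hij] at this
    exact h1 (Nat.dvd_one.mp this)
  have hHS : H = ∏ d ∈ S, cyclotomic d ℚ := by
    rw [hSdef, Finset.prod_biUnion hdisj]
    exact (Finset.prod_congr rfl fun i _ => prod_cyclotomic_eq_geom_sum (hw0 i) ℚ).symm
  -- S ⊆ D
  have hSD : S ⊆ D := by
    intro d hd
    obtain ⟨i, _, hdi⟩ := Finset.mem_biUnion.mp hd
    have h1 : d ≠ 1 := Finset.ne_of_mem_erase hdi
    have hdw : d ∣ w i := Nat.dvd_of_mem_divisors (Finset.mem_of_mem_erase hdi)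
    exact Finset.mem_erase.mpr ⟨h1,
      Nat.mem_divisors.mpr ⟨hdw.trans (Nat.gcd_dvd_left _ _), hs0.ne'⟩⟩
  -- H ∣ A
  have hHA : H ∣ A := by
    apply Finset.prod_dvd_prod_of_dvd
    intro i _
    have h1 : (∑ j ∈ Finset.range (w i), (X : ℚ[X]) ^ j) ∣ (X : ℚ[X]) ^ (w i) - 1 :=
      ⟨X - 1, (geom_sum_mul X (w i)).symm⟩
    have h2 : ((X : ℚ[X]) ^ (w i) - 1) ∣ (X : ℚ[X]) ^ (b i) - 1 := by
      obtain ⟨k, hk⟩ := Nat.gcd_dvd_right s (b i)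
      have := sub_dvd_pow_sub_pow ((X : ℚ[X]) ^ (w i)) 1 k
      rwa [← pow_mul, one_pow, ← hk] at this
    have := h1.trans h2
    rwa [show (X : ℚ[X]) ^ (b i) - 1 = -(1 - X ^ (b i)) by ring, dvd_neg] at this
  -- H ∣ B
  have hBD : B = ∏ d ∈ D, cyclotomic d ℚ := (prod_cyclotomic_eq_geom_sum hs0 ℚ).symm
  have hHB : H ∣ B := by
    rw [hHS, hBD]; exact Finset.prod_dvd_prod_of_subset _ _ _ hSD
  -- A coprime to the complementary cyclotomic factors
  have hcop : IsCoprime A (∏ d ∈ D \ S, cyclotomic d ℚ) := by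
    apply IsCoprime.prod_right
    intro d hd
    obtain ⟨hdD, hdS⟩ := Finset.mem_sdiff.mp hd
    have h1 : d ≠ 1 := Finset.ne_of_mem_erase hdD
    have hds : d ∣ s := Nat.dvd_of_mem_divisors (Finset.mem_of_mem_erase hdD)
    have hdpos : 0 < d := Nat.pos_of_mem_divisors (Finset.mem_of_mem_erase hdD)
    rw [isCoprime_comm, (cyclotomic.irreducible_rat hdpos).coprime_iff_not_dvd]
    intro hdvd
    have hprime : Prime (cyclotomic d ℚ) := (cyclotomic.irreducible_rat hdpos).prime
    obtain ⟨i, _, hdvdi⟩ := hprime.exists_mem_finset_dvd hdvd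
    have hdvd' : cyclotomic d ℚ ∣ (X : ℚ[X]) ^ (b i) - 1 := by
      rwa [show (X : ℚ[X]) ^ (b i) - 1 = -(1 - X ^ (b i)) by ring, dvd_neg]
    rw [← prod_cyclotomic_eq_X_pow_sub_one (hb i) ℚ] at hdvd'
    obtain ⟨e, he, hde⟩ := hprime.exists_mem_finset_dvd hdvd'
    have hdeq : d = e := by
      by_contra hne
      exact hprime.not_unit ((cyclotomic.isCoprime_rat hne).isUnit_of_dvd' dvd_rfl hde)
    subst hdeq
    have hdb : d ∣ b i := Nat.dvd_of_mem_divisors he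
    exact hdS (Finset.mem_biUnion.mpr ⟨i, Finset.mem_univ i,
      Finset.mem_erase.mpr ⟨h1, Nat.mem_divisors.mpr ⟨Nat.dvd_gcd hds hdb, (hw0 i).ne'⟩⟩⟩)
  -- B = (∏_{D\S}) * H
  have hBfac : B = (∏ d ∈ D \ S, cyclotomic d ℚ) * H := by
    rw [hBD, hHS, Finset.prod_sdiff hSD]
  apply associated_of_dvd_dvd
  · exact EuclideanDomain.dvd_gcd hHA hHB
  · have hg1 : EuclideanDomain.gcd A B ∣ A := EuclideanDomain.gcd_dvd_left A B
    have hg2 : EuclideanDomain.gcd A B ∣ B := EuclideanDomain.gcd_dvd_right A B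
    exact (hcop.of_isCoprime_of_dvd_left hg1).dvd_of_dvd_mul_left (hg2.trans hBfac.dvd)
end

section
/- Let s ≥ 2 and b_1,…,b_n positive integers none divisible by s, with w_i = gcd(s, b_i) and gcd(s, b_i, b_j) = 1 for i ≠ j. Let α_i be the smallest positive integer with α_i b_i ≡ w_i (mod s). Then the polynomial ∏_{i=1}^n (1 − t^{α_i b_i})/(1 − t^{b_i}) has integral coefficients and is an inverse of ∏_{i=1}^n (1 − t^{b_i})/(1 − t^{w_i}) modulo (1 − t^s)/((1−t)h), where h = ∏_{i=1}^n (1 − t^{w_i})/(1 − t). -/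
open Polynomial

section AuxIIM

open Finset

private lemma aux_ne_iim (b : ℕ) (hb : 0 < b) : (1 - (X:ℚ[X])^b) ≠ 0 := by
  intro h
  have := congrArg (fun p => Polynomial.coeff p b) h
  simp [coeff_one, hb.ne'] at this

private lemma aux_mul_iim (b m : ℕ) :
    (1 - (X:ℚ[X])^b) * (∑ j ∈ range m, X^(j*b)) = 1 - X^(m*b) := by
  have h := geom_sum_mul ((X:ℚ[X])^b) m
  have h2 : ∀ j, ((X:ℚ[X])^b)^j = X^(j*b) := fun j => by rw [← pow_mul, mul_comm]
  simp only [h2] at h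
  linear_combination -h

private lemma aux_div_iim (b m : ℕ) (hb : 0 < b) :
    (1 - (X:ℚ[X])^(m*b)) / (1 - X^b) = ∑ j ∈ range m, X^(j*b) := by
  rw [← aux_mul_iim, mul_div_cancel_left₀ _ (aux_ne_iim b hb)]

private lemma aux_div1_iim (w : ℕ) : (1 - (X:ℚ[X])^w) / (1 - X) = ∑ j ∈ range w, X^j := by
  have := aux_div_iim 1 w one_pos
  simpa using this

private lemma aux_prod_sub_iim {ι : Type*} (t : Finset ι) (f g : ι → ℚ[X]) (d : ℚ[X])
    (h : ∀ i ∈ t, d ∣ f i - g i) : d ∣ ∏ i ∈ t, f i - ∏ i ∈ t, g i := by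
  classical
  induction t using Finset.induction_on with
  | empty => simp
  | @insert a u hx ih =>
    rw [prod_insert hx, prod_insert hx]
    have h1 : d ∣ f a - g a := h a (mem_insert_self a u)
    have h2 : d ∣ ∏ i ∈ u, f i - ∏ i ∈ u, g i := ih fun i hi => h i (mem_insert_of_mem hi)
    have heq : f a * ∏ i ∈ u, f i - g a * ∏ i ∈ u, g i
        = f a * (∏ i ∈ u, f i - ∏ i ∈ u, g i) + (f a - g a) * ∏ i ∈ u, g i := by ring
    rw [heq]
    exact dvd_add (Dvd.dvd.mul_left h2 _) (h1.mul_right _)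

end AuxIIM

/-- Let `s ≥ 2`, `b_1, …, b_n` positive none divisible by `s`, `w_i = gcd(s, b_i)` with
`gcd(s, b_i, b_j) = 1` for `i ≠ j`, and let `α_i` be the smallest positive integer with
`α_i b_i ≡ w_i (mod s)`. Then `∏_i (1 - t^{α_i b_i})/(1 - t^{b_i})` has integral coefficients
and is an inverse of `∏_i (1 - t^{b_i})/(1 - t^{w_i})` modulo `(1 - t^s)/((1-t)h)`, where
`h = ∏_i (1 - t^{w_i})/(1 - t)`. -/
theorem integral_inverse_mod (s n : ℕ) (hs : 2 ≤ s) (b : Fin n → ℕ)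
    (hb : ∀ i, 0 < b i) (hsb : ∀ i, ¬ s ∣ b i)
    (hpair : ∀ i j, i ≠ j → Nat.gcd s (Nat.gcd (b i) (b j)) = 1)
    (α : Fin n → ℕ)
    (hα : ∀ i, 0 < α i ∧ α i * b i ≡ Nat.gcd s (b i) [MOD s] ∧
      ∀ m : ℕ, 0 < m → m * b i ≡ Nat.gcd s (b i) [MOD s] → α i ≤ m) :
    (∀ k : ℕ, ∃ z : ℤ,
      (∏ i, ((1 - (X : ℚ[X]) ^ (α i * b i)) / (1 - (X : ℚ[X]) ^ (b i)))).coeff k = (z : ℚ)) ∧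
    ((∑ j ∈ Finset.range s, (X : ℚ[X]) ^ j) /
        ∏ i, ((1 - (X : ℚ[X]) ^ (Nat.gcd s (b i))) / (1 - (X : ℚ[X])))) ∣
      ((∏ i, ((1 - (X : ℚ[X]) ^ (α i * b i)) / (1 - (X : ℚ[X]) ^ (b i)))) *
        (∏ i, ((1 - (X : ℚ[X]) ^ (b i)) / (1 - (X : ℚ[X]) ^ (Nat.gcd s (b i))))) - 1) := by
  classical
  have hs0 : s ≠ 0 := by omega
  set w : Fin n → ℕ := fun i => Nat.gcd s (b i) with hwdef
  have hw0 : ∀ i, 0 < w i := fun i => Nat.gcd_pos_of_pos_left _ (by omega)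
  have hwb : ∀ i, w i ∣ b i := fun i => Nat.gcd_dvd_right _ _
  have hws : ∀ i, w i ∣ s := fun i => Nat.gcd_dvd_left _ _
  -- rewrite the three quotient products as genuine polynomials
  have hA : (∏ i, ((1 - (X : ℚ[X]) ^ (α i * b i)) / (1 - (X : ℚ[X]) ^ (b i))))
      = ∏ i, ∑ j ∈ Finset.range (α i), (X:ℚ[X])^(j * b i) :=
    Finset.prod_congr rfl fun i _ => aux_div_iim (b i) (α i) (hb i)
  have hB : (∏ i, ((1 - (X : ℚ[X]) ^ (b i)) / (1 - (X : ℚ[X]) ^ (Nat.gcd s (b i)))))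
      = ∏ i, ∑ j ∈ Finset.range (b i / w i), (X:ℚ[X])^(j * w i) := by
    refine Finset.prod_congr rfl fun i _ => ?_
    rw [show (1 - (X:ℚ[X])^(b i)) = 1 - X^((b i / w i) * w i) from by
      rw [Nat.div_mul_cancel (hwb i)]]
    exact aux_div_iim (w i) (b i / w i) (hw0 i)
  have hH : (∏ i, ((1 - (X : ℚ[X]) ^ (Nat.gcd s (b i))) / (1 - (X : ℚ[X]))))
      = ∏ i, ∑ j ∈ Finset.range (w i), (X:ℚ[X])^j :=
    Finset.prod_congr rfl fun i _ => aux_div1_iim (w i)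
  rw [hA, hB, hH]
  set A : ℚ[X] := ∏ i, ∑ j ∈ Finset.range (α i), (X:ℚ[X])^(j * b i) with hAdef
  set B : ℚ[X] := ∏ i, ∑ j ∈ Finset.range (b i / w i), (X:ℚ[X])^(j * w i) with hBdef
  set h : ℚ[X] := ∏ i, ∑ j ∈ Finset.range (w i), (X:ℚ[X])^j with hhdef
  set gs : ℚ[X] := ∑ j ∈ Finset.range s, (X:ℚ[X])^j with hgsdef
  constructor
  · -- integrality
    intro k
    refine ⟨(∏ i, ∑ j ∈ Finset.range (α i), (X:ℤ[X])^(j * b i)).coeff k, ?_⟩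
    have hmap : A = Polynomial.map (Int.castRingHom ℚ)
        (∏ i, ∑ j ∈ Finset.range (α i), (X:ℤ[X])^(j * b i)) := by
      simp [hAdef, Polynomial.map_prod, Polynomial.map_sum, Polynomial.map_pow]
    rw [hmap, Polynomial.coeff_map]
    simp
  · -- divisibility
    rcases Nat.eq_zero_or_pos n with hn | hn
    · subst hn
      simp [hAdef, hBdef]
    obtain ⟨m, rfl⟩ : ∃ m, n = m + 1 := ⟨n - 1, by omega⟩
    have hcyc : ∀ i, (∑ j ∈ Finset.range (w i), (X:ℚ[X])^j)
        = ∏ d ∈ (w i).divisors.erase 1, cyclotomic d ℚ :=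
      fun i => (prod_cyclotomic_eq_geom_sum (hw0 i) ℚ).symm
    have hgscyc : gs = ∏ d ∈ s.divisors.erase 1, cyclotomic d ℚ :=
      (prod_cyclotomic_eq_geom_sum (by omega) ℚ).symm
    have hdvd_i : ∀ i, (∑ j ∈ Finset.range (w i), (X:ℚ[X])^j) ∣ gs := by
      intro i
      rw [hcyc i, hgscyc]
      exact Finset.prod_dvd_prod_of_subset _ _ _
        (Finset.erase_subset_erase 1 (Nat.divisors_subset_of_dvd hs0 (hws i)))
    have hcop : ∀ i j, i ≠ j → IsCoprime (∑ r ∈ Finset.range (w i), (X:ℚ[X])^r)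
        (∑ r ∈ Finset.range (w j), (X:ℚ[X])^r) := by
      intro i j hij
      rw [hcyc i, hcyc j]
      refine IsCoprime.prod_left fun d hd => IsCoprime.prod_right fun e he => ?_
      refine cyclotomic.isCoprime_rat fun hde => ?_
      subst hde
      have hd1 : d ≠ 1 := (Finset.mem_erase.mp hd).1
      have hdw : d ∣ w i := (Nat.mem_divisors.mp (Finset.mem_erase.mp hd).2).1
      have hew : d ∣ w j := (Nat.mem_divisors.mp (Finset.mem_erase.mp he).2).1
      have hd1' : d ∣ 1 := by
        rw [← hpair i j hij]
        exact Nat.dvd_gcd (hdw.trans (hws i))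
          (Nat.dvd_gcd (hdw.trans (hwb i)) (hew.trans (hwb j)))
      exact hd1 (Nat.dvd_one.mp hd1')
    have hhd : h ∣ gs :=
      Finset.prod_dvd_of_coprime (fun i _ j _ hij => hcop i j hij) (fun i _ => hdvd_i i)
    have hh1ne : Polynomial.eval 1 h ≠ 0 := by
      have : Polynomial.eval 1 h = ∏ i, (w i : ℚ) := by simp [hhdef, eval_prod]
      rw [this]
      exact Finset.prod_ne_zero_iff.mpr fun i _ => Nat.cast_ne_zero.mpr (hw0 i).ne'
    have hhne : h ≠ 0 := fun e => hh1ne (by rw [e]; simp)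
    have hgh : (gs / h) * h = gs := by
      rw [mul_comm]; exact EuclideanDomain.mul_div_cancel' hhne hhd
    have hgs1 : Polynomial.eval 1 gs = (s : ℚ) := by simp [hgsdef]
    have hge : Polynomial.eval 1 (gs / h) ≠ 0 := by
      intro h0
      have := congrArg (Polynomial.eval 1) hgh
      rw [eval_mul, h0, zero_mul, hgs1] at this
      exact hs0 (by exact_mod_cast this.symm)
    have hXne : (X : ℚ[X]) - 1 ≠ 0 := by
      simpa using X_sub_C_ne_zero (1:ℚ)
    have hcop1 : IsCoprime ((X:ℚ[X]) - 1) (gs / h) := by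
      set g : ℚ[X] := gs / h with hgdef
      set e : ℚ := Polynomial.eval 1 g with hedef
      set q : ℚ[X] := g /ₘ (X - C 1) with hqdef
      have hmod : g = C e + (X - C 1) * q := by
        conv_lhs => rw [← modByMonic_add_div g (X - C (1:ℚ))]
        rw [modByMonic_X_sub_C_eq_C_eval]
      refine ⟨-C e⁻¹ * q, C e⁻¹, ?_⟩
      rw [hmod]
      have hCe : C e⁻¹ * C e = 1 := by
        rw [← C_mul, inv_mul_cancel₀ hge, C_1]
      have hC1 : (C (1:ℚ) : ℚ[X]) = 1 := C_1
      rw [hC1] at hmod ⊢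
      linear_combination hCe
    -- key congruence mod X^s - 1
    have hkey : ∀ i, ((X:ℚ[X])^s - 1) ∣ (1 - X^(α i * b i)) - (1 - X^(w i)) := by
      intro i
      have hle : w i ≤ α i * b i :=
        le_trans (Nat.le_of_dvd (hb i) (hwb i)) (Nat.le_mul_of_pos_left (b i) (hα i).1)
      have hmod : s ∣ α i * b i - w i := (Nat.modEq_iff_dvd' hle).mp ((hα i).2.1).symm
      obtain ⟨k, hk⟩ := hmod
      have hexp : α i * b i = w i + s * k := by omega
      have hfac : (1 - (X:ℚ[X])^(α i * b i)) - (1 - X^(w i))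
          = -(X^(w i) * (((X:ℚ[X])^s)^k - 1)) := by
        rw [hexp, pow_add, pow_mul]; ring
      rw [hfac]
      have hpow : ((X:ℚ[X])^s - 1) ∣ ((X:ℚ[X])^s)^k - 1 := by
        simpa using sub_dvd_pow_sub_pow ((X:ℚ[X])^s) 1 k
      exact dvd_neg.mpr (hpow.mul_left _)
    have hprodcong : ((X:ℚ[X])^s - 1) ∣
        (∏ i, (1 - (X:ℚ[X])^(α i * b i))) - ∏ i, (1 - (X:ℚ[X])^(w i)) :=
      aux_prod_sub_iim Finset.univ _ _ _ fun i _ => hkey i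
    have hABfac : (∏ i, (1 - (X:ℚ[X])^(w i))) * (A * B) = ∏ i, (1 - (X:ℚ[X])^(α i * b i)) := by
      rw [hAdef, hBdef, ← Finset.prod_mul_distrib, ← Finset.prod_mul_distrib]
      refine Finset.prod_congr rfl fun i _ => ?_
      have h1 : (1 - (X:ℚ[X])^(w i)) * ∑ j ∈ Finset.range (b i / w i), X^(j * w i)
          = 1 - X^(b i) := by
        rw [aux_mul_iim, Nat.div_mul_cancel (hwb i)]
      calc (1 - (X:ℚ[X])^(w i)) * ((∑ j ∈ Finset.range (α i), X^(j * b i)) *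
            ∑ j ∈ Finset.range (b i / w i), X^(j * w i))
          = ((1 - (X:ℚ[X])^(w i)) * ∑ j ∈ Finset.range (b i / w i), X^(j * w i)) *
            ∑ j ∈ Finset.range (α i), X^(j * b i) := by ring
        _ = (1 - X^(b i)) * ∑ j ∈ Finset.range (α i), X^(j * b i) := by rw [h1]
        _ = 1 - X^(α i * b i) := aux_mul_iim (b i) (α i)
    have hwprod : (∏ i, (1 - (X:ℚ[X])^(w i))) = (1 - X)^(m+1) * h := by
      have hfac1 : ∀ i : Fin (m+1),
          (1 - (X:ℚ[X])^(w i)) = (1 - X) * ∑ j ∈ Finset.range (w i), X^j := by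
        intro i
        have := aux_mul_iim 1 (w i)
        simp only [pow_one, mul_one] at this
        exact this.symm
      rw [Finset.prod_congr rfl fun i _ => hfac1 i, Finset.prod_mul_distrib, ← hhdef,
        Finset.prod_const, Finset.card_univ, Fintype.card_fin]
    have hdvd1 : gs * ((X:ℚ[X]) - 1) ∣ (∏ i, (1 - (X:ℚ[X])^(w i))) * (A * B - 1) := by
      rw [hgsdef, geom_sum_mul]
      have heq : (∏ i, (1 - (X:ℚ[X])^(w i))) * (A * B - 1)
          = (∏ i, (1 - (X:ℚ[X])^(α i * b i))) - ∏ i, (1 - (X:ℚ[X])^(w i)) := by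
        rw [mul_sub, hABfac, mul_one]
      rw [heq]
      exact hprodcong
    rw [← hgh, hwprod] at hdvd1
    set D : ℚ[X] := A * B - 1 with hDdef
    have hstep : (h * (gs/h)) * ((X:ℚ[X]) - 1) ∣ (h * (-((1 - X)^m * D))) * ((X:ℚ[X]) - 1) := by
      have e1 : (h * (gs/h)) * ((X:ℚ[X]) - 1) = gs/h * h * (X - 1) := by ring
      have e2 : (h * (-((1 - X)^m * D))) * ((X:ℚ[X]) - 1) = (1-X)^(m+1) * h * D := by ring
      rw [e1, e2]
      exact hdvd1
    have hstep2 : h * (gs/h) ∣ h * (-((1 - X)^m * D)) := (mul_dvd_mul_iff_right hXne).mp hstep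
    have hstep3 : gs/h ∣ -((1 - (X:ℚ[X]))^m * D) := (mul_dvd_mul_iff_left hhne).mp hstep2
    have hstep4 : gs/h ∣ (1 - (X:ℚ[X]))^m * D := dvd_neg.mp hstep3
    have hcopg : IsCoprime (gs/h) ((1 - (X:ℚ[X]))^m) := by
      have h1X : IsCoprime (gs/h) (1 - (X:ℚ[X])) := by
        have := hcop1.symm.neg_right
        rwa [neg_sub] at this
      exact h1X.pow_right
    exact hcopg.dvd_of_dvd_mul_left hstep4
end

section
/- Let r ≥ 2 and let a_1, …, a_{n−1} be positive integers coprime to r. For 1 ≤ j ≤ n−1 define δ_{i,j} = (1/r)·Σ_{ε ∈ μ_r, ε ≠ 1} ε^i (1 + ε^{-a_j}) / ((1 − ε^{-a_j})^2 ∏_{l ≠ j}(1 − ε^{-a_l})). Then the polynomial Σ_{i=0}^{r−1} δ_{i,j} t^i satisfies (Σ_{i=0}^{r−1} δ_{i,j} t^i) · (1 − t^{a_1}) ⋯ (1 − t^{a_j})^2 ⋯ (1 − t^{a_{n−1}}) ≡ 1 + t^{a_j} modulo (1 − t^r)/(1 − t) in ℂ[t]. -/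
open Polynomial Finset

private lemma delta_eval_aux (r m : ℕ) (hr0 : 0 < r) (a : Fin m → ℕ)
    (hcop : ∀ l, Nat.Coprime (a l) r) (j : Fin m)
    (ζ : ℂ) (hζ : ζ ∈ (nthRootsFinset r (1 : ℂ)).filter (fun ε => ε ≠ 1)) :
    (∑ i ∈ Finset.range r, ((1 / r : ℂ) *
        ∑ ε ∈ (nthRootsFinset r (1 : ℂ)).filter (fun ε => ε ≠ 1),
          ε ^ i * (1 + ε ^ (-(a j : ℤ))) /
            ((1 - ε ^ (-(a j : ℤ))) ^ 2 * ∏ l ∈ Finset.univ.erase j, (1 - ε ^ (-(a l : ℤ))))) * ζ ^ i)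
      * ((1 - ζ ^ (a j)) * ∏ l, (1 - ζ ^ (a l))) - (1 + ζ ^ (a j)) = 0 := by
  classical
  set s := (nthRootsFinset r (1 : ℂ)).filter (fun ε => ε ≠ 1) with hs
  have hrC : (r : ℂ) ≠ 0 := Nat.cast_ne_zero.mpr hr0.ne'
  have hmem : ∀ ε ∈ s, ε ^ r = 1 ∧ ε ≠ 1 := by
    intro ε hε
    rw [hs, Finset.mem_filter, mem_nthRootsFinset hr0] at hε
    exact hε
  obtain ⟨hζr, hζ1⟩ := hmem ζ hζ
  have hζ0 : ζ ≠ 0 := ne_zero_of_mem_nthRootsFinset one_ne_zero (Finset.mem_of_mem_filter ζ hζ)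
  have hpow : ∀ l, ζ ^ (a l) ≠ 1 := by
    intro l h1
    have h2 : orderOf ζ ∣ Nat.gcd (a l) r :=
      Nat.dvd_gcd (orderOf_dvd_of_pow_eq_one h1) (orderOf_dvd_of_pow_eq_one hζr)
    rw [hcop l, Nat.dvd_one, orderOf_eq_one_iff] at h2
    exact hζ1 h2
  have hinv : ζ⁻¹ ∈ s := by
    rw [hs, Finset.mem_filter, mem_nthRootsFinset hr0, inv_pow, hζr, inv_one]
    exact ⟨rfl, fun h => hζ1 (by rw [← inv_inv ζ, h, inv_one])⟩
  set A : ℂ → ℂ := fun ε => 1 + ε ^ (-(a j : ℤ)) with hA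
  set D : ℂ → ℂ := fun ε =>
    (1 - ε ^ (-(a j : ℤ))) ^ 2 * ∏ l ∈ Finset.univ.erase j, (1 - ε ^ (-(a l : ℤ))) with hD
  have step1 : (∑ i ∈ Finset.range r, ((1 / r : ℂ) * ∑ ε ∈ s, ε ^ i * A ε / D ε) * ζ ^ i)
      = (1 / r : ℂ) * ∑ ε ∈ s, (∑ i ∈ Finset.range r, (ε * ζ) ^ i) * (A ε / D ε) := by
    simp_rw [mul_assoc, ← Finset.mul_sum, Finset.sum_mul]
    rw [Finset.sum_comm]
    congr 1
    refine Finset.sum_congr rfl fun ε _ => ?_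
    refine Finset.sum_congr rfl fun i _ => ?_
    rw [mul_pow]
    ring
  have hzpow : ∀ n : ℕ, (ζ⁻¹ : ℂ) ^ (-(n : ℤ)) = ζ ^ n := by
    intro n
    rw [zpow_neg, inv_zpow, inv_inv, zpow_natCast]
  have step2 : ∑ ε ∈ s, (∑ i ∈ Finset.range r, (ε * ζ) ^ i) * (A ε / D ε)
      = (r : ℂ) * (A ζ⁻¹ / D ζ⁻¹) := by
    rw [Finset.sum_eq_single ζ⁻¹]
    · rw [inv_mul_cancel₀ hζ0]
      simp [Finset.card_range]
    · intro ε hε hne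
      have hεζ : ε * ζ ≠ 1 := fun h => hne (eq_inv_of_mul_eq_one_left h)
      rw [geom_sum_eq hεζ, mul_pow, (hmem ε hε).1, hζr, one_mul, sub_self, zero_div, zero_mul]
    · intro h; exact absurd hinv h
  rw [step1, step2]
  have hAv : A ζ⁻¹ = 1 + ζ ^ (a j) := by rw [hA]; simp only [hzpow]
  have hDv : D ζ⁻¹ = (1 - ζ ^ (a j)) ^ 2 * ∏ l ∈ Finset.univ.erase j, (1 - ζ ^ (a l)) := by
    rw [hD]; simp only [hzpow]
  have hDne : D ζ⁻¹ ≠ 0 := by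
    rw [hDv]
    refine mul_ne_zero (pow_ne_zero _ (sub_ne_zero_of_ne (Ne.symm (hpow j)))) ?_
    exact Finset.prod_ne_zero_iff.mpr fun l _ => sub_ne_zero_of_ne (Ne.symm (hpow l))
  have hprod : (∏ l, (1 - ζ ^ (a l))) = (1 - ζ ^ (a j)) * ∏ l ∈ Finset.univ.erase j, (1 - ζ ^ (a l)) :=
    (Finset.mul_prod_erase Finset.univ _ (Finset.mem_univ j)).symm
  rw [hAv, hDv] at *
  rw [hprod]
  field_simp [sub_ne_zero_of_ne (Ne.symm (hpow j)), Finset.prod_ne_zero_iff.mpr fun l (_ : l ∈ Finset.univ.erase j) => sub_ne_zero_of_ne (Ne.symm (hpow l))]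
  ring

/-- For `r ≥ 2` and `a_1, …, a_m` positive integers coprime to `r`, the polynomial
`Σ_{i<r} δ_{i,j} t^i`, where
`δ_{i,j} = (1/r) Σ_{ε ∈ μ_r, ε ≠ 1} ε^i (1 + ε^{-a_j})/((1 - ε^{-a_j})² ∏_{l ≠ j}(1 - ε^{-a_l}))`,
satisfies `(Σ_i δ_{i,j} t^i)·(1-t^{a_1})⋯(1-t^{a_j})²⋯(1-t^{a_m}) ≡ 1 + t^{a_j}`
modulo `(1-t^r)/(1-t)` in `ℂ[t]`. -/
theorem delta_inverse_mod (r m : ℕ) (hr : 2 ≤ r) (a : Fin m → ℕ)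
    (ha : ∀ l, 0 < a l) (hcop : ∀ l, Nat.Coprime (a l) r) (j : Fin m) :
    (∑ i ∈ Finset.range r, (X : ℂ[X]) ^ i) ∣
      ((∑ i ∈ Finset.range r,
          Polynomial.C ((1 / r : ℂ) *
            ∑ ε ∈ (nthRootsFinset r (1 : ℂ)).filter (fun ε => ε ≠ 1),
              ε ^ i * (1 + ε ^ (-(a j : ℤ))) /
                ((1 - ε ^ (-(a j : ℤ))) ^ 2 *
                  ∏ l ∈ Finset.univ.erase j, (1 - ε ^ (-(a l : ℤ))))) * X ^ i) *
        ((1 - (X : ℂ[X]) ^ (a j)) * ∏ l, (1 - (X : ℂ[X]) ^ (a l))) -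
        (1 + (X : ℂ[X]) ^ (a j))) := by
  classical
  have hr0 : 0 < r := lt_of_lt_of_le two_pos hr
  have hfact : (∑ i ∈ Finset.range r, (X : ℂ[X]) ^ i) =
      ∏ ζ ∈ (nthRootsFinset r (1 : ℂ)).filter (fun ε => ε ≠ 1), (X - C ζ) := by
    have hprim := Complex.isPrimitiveRoot_exp r hr0.ne'
    have h1 : (X : ℂ[X]) ^ r - 1 = ∏ ζ ∈ nthRootsFinset r (1 : ℂ), (X - C ζ) :=
      X_pow_sub_one_eq_prod hr0 hprim
    have h2 : (nthRootsFinset r (1 : ℂ)).filter (fun ε => ε ≠ 1) = (nthRootsFinset r (1 : ℂ)).erase 1 := by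
      ext x; simp [Finset.mem_erase, and_comm]
    have h3 : ((X : ℂ[X]) - C 1) * ∏ ζ ∈ (nthRootsFinset r (1 : ℂ)).filter (fun ε => ε ≠ 1), (X - C ζ)
        = (X : ℂ[X]) ^ r - 1 := by
      rw [h2, Finset.mul_prod_erase (nthRootsFinset r (1 : ℂ)) (fun ζ => X - C ζ)
        (one_mem_nthRootsFinset hr0), h1]
    have h4 : ((X : ℂ[X]) - C 1) * (∑ i ∈ Finset.range r, (X : ℂ[X]) ^ i) = X ^ r - 1 := by
      rw [map_one, mul_comm, geom_sum_mul]
    exact mul_left_cancel₀ (X_sub_C_ne_zero 1) (h4.trans h3.symm)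
  rw [hfact]
  refine Finset.prod_dvd_of_coprime (fun ζ _ η _ hne => ?_) (fun ζ hζ => ?_)
  · exact isCoprime_X_sub_C_of_isUnit_sub (sub_ne_zero.mpr hne).isUnit
  · rw [dvd_iff_isRoot, IsRoot]
    simp only [eval_sub, eval_mul, eval_add, eval_one, eval_pow, eval_X, eval_finset_sum,
      eval_C, eval_prod]
    exact delta_eval_aux r m hr0 a hcop j ζ hζ
end

section
/- Suppose S(t), s_1(t), …, s_l(t) ∈ ℚ[t] satisfy S(t) = Σ_{i=1}^l s_i(t) · ∏_{j ≠ i} (1 − t^{w_j})/(1 − t), where w_1, …, w_l ≥ 2 are pairwise coprime integers. Then for each i, s_i(t) ≡ S(t) · ∏_{j ≠ i} (1 − t^{w_j v_{ij}})/(1 − t^{w_j}) modulo (1 − t^{w_i})/(1 − t), where v_{ij} is any positive integer with w_j v_{ij} ≡ 1 (mod w_i). -/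
open Polynomial Finset

private lemma xsub1_ne : (X - 1 : ℚ[X]) ≠ 0 := by
  intro h
  have := congrArg (Polynomial.eval 0) h
  simp at this

private lemma geom_prod (a b : ℕ) :
    (∑ d ∈ range a, (X:ℚ[X])^d) * (∑ d ∈ range b, (X:ℚ[X])^(d*a)) =
      ∑ d ∈ range (a*b), (X:ℚ[X])^d := by
  apply mul_right_cancel₀ xsub1_ne
  simp_rw [pow_mul']
  calc (∑ d ∈ range a, (X:ℚ[X])^d) * (∑ d ∈ range b, ((X:ℚ[X])^a)^d) * (X-1)
      = (∑ d ∈ range b, ((X:ℚ[X])^a)^d) * ((∑ d ∈ range a, (X:ℚ[X])^d) * (X-1)) := by ring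
    _ = (∑ d ∈ range b, ((X:ℚ[X])^a)^d) * ((X:ℚ[X])^a - 1) := by rw [geom_sum_mul]
    _ = ((X:ℚ[X])^a)^b - 1 := geom_sum_mul ..
    _ = (∑ d ∈ range (a*b), (X:ℚ[X])^d) * (X-1) := by rw [geom_sum_mul, pow_mul]

private lemma geom_dvd (q k : ℕ) :
    (∑ d ∈ range q, (X:ℚ[X])^d) ∣ (∑ d ∈ range (1 + k*q), (X:ℚ[X])^d) - 1 := by
  rw [← mul_dvd_mul_iff_right xsub1_ne, geom_sum_mul, sub_mul, geom_sum_mul, one_mul]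
  have h1 : (X:ℚ[X])^(1+k*q) - 1 - (X - 1) = X * (((X:ℚ[X])^q)^k - 1) := by
    rw [pow_add, pow_mul', pow_one]; ring
  rw [h1]
  exact Dvd.dvd.mul_left (by simpa using sub_dvd_pow_sub_pow ((X:ℚ[X])^q) 1 k) X

/-- Suppose `S = Σ_i s_i · ∏_{j ≠ i} (1 + t + ⋯ + t^{w_j - 1})` in `ℚ[t]`, where the
`w_i ≥ 2` are pairwise coprime. Then for each `i`,
`s_i ≡ S · ∏_{j ≠ i} (1 + t^{w_j} + ⋯ + t^{w_j(v_{ij}-1)})` modulo `1 + t + ⋯ + t^{w_i - 1}`,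
for any positive `v_{ij}` with `w_j v_{ij} ≡ 1 (mod w_i)`. -/
theorem component_congruence (l : ℕ) (w : Fin l → ℕ) (hw : ∀ i, 2 ≤ w i)
    (hcop : ∀ i j, i ≠ j → Nat.Coprime (w i) (w j))
    (v : Fin l → Fin l → ℕ) (hv : ∀ i j, i ≠ j → 0 < v i j ∧ w j * v i j ≡ 1 [MOD w i])
    (S : ℚ[X]) (s : Fin l → ℚ[X])
    (hS : S = ∑ i, s i * ∏ j ∈ Finset.univ.erase i,
      ∑ d ∈ Finset.range (w j), (X : ℚ[X]) ^ d) :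
    ∀ i, (∑ d ∈ Finset.range (w i), (X : ℚ[X]) ^ d) ∣
      (s i - S * ∏ j ∈ Finset.univ.erase i,
        ∑ d ∈ Finset.range (v i j), (X : ℚ[X]) ^ (d * w j)) := by
  intro i
  have key : ∀ j, j ≠ i → (∑ d ∈ range (w i), (X:ℚ[X])^d) ∣
      (∑ d ∈ range (w j), (X:ℚ[X])^d) *
      (∑ d ∈ range (v i j), (X:ℚ[X])^(d * w j)) - 1 := by
    intro j hj
    rw [geom_prod]
    obtain ⟨hvpos, hmod⟩ := hv i j (Ne.symm hj)
    set m := w j * v i j with hmdef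
    have hdm : w i * (m / w i) + m % w i = m := Nat.div_add_mod m (w i)
    have hm1 : m % w i = 1 := by
      have : (1 : ℕ) % w i = 1 := Nat.mod_eq_of_lt (by have := hw i; omega)
      rw [Nat.ModEq] at hmod
      rw [hmod, this]
    have hm : m = 1 + (m / w i) * w i := by
      conv_lhs => rw [← hdm, hm1]
      ring
    rw [hm]
    exact geom_dvd _ _
  set Φ : ℚ[X] := ∑ d ∈ range (w i), (X:ℚ[X])^d with hΦdef
  set I := Ideal.span {Φ} with hIdef
  set f := Ideal.Quotient.mk I with hfdef
  rw [← Ideal.mem_span_singleton (α := ℚ[X]), ← hIdef,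
    ← Ideal.Quotient.eq_zero_iff_mem, map_sub, sub_eq_zero, ← hfdef]
  have hΦ0 : f Φ = 0 := Ideal.Quotient.eq_zero_iff_mem.2 (Ideal.subset_span rfl)
  rw [hS, map_mul, map_sum, Finset.sum_mul]
  rw [Finset.sum_eq_single i]
  · rw [map_mul, map_prod, map_prod, mul_assoc, ← Finset.prod_mul_distrib]
    have hone : ∀ j ∈ univ.erase i,
        f (∑ d ∈ range (w j), (X:ℚ[X])^d) * f (∑ d ∈ range (v i j), (X:ℚ[X])^(d*w j)) = 1 := by
      intro j hj
      have hji : j ≠ i := (mem_erase.1 hj).1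
      have h0 : f (((∑ d ∈ range (w j), (X:ℚ[X])^d) *
          ∑ d ∈ range (v i j), (X:ℚ[X])^(d*w j)) - 1) = 0 :=
        Ideal.Quotient.eq_zero_iff_mem.2 (Ideal.mem_span_singleton.2 (key j hji))
      rw [map_sub, map_mul, map_one, sub_eq_zero] at h0
      exact h0
    rw [Finset.prod_congr rfl hone, Finset.prod_const_one, mul_one]
  · intro k _ hk
    rw [map_mul, map_prod]
    rw [Finset.prod_eq_zero (Finset.mem_erase.2 ⟨Ne.symm hk, mem_univ i⟩) hΦ0]
    ring
  · simp
end
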